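/- Every equilibrium of the stacked correction dynamics is consensus at a Nash equilibrium: if 𝐱* = (x*¹,…,x*^N) ∈ (ℝ^N)^N satisfies α·(L⊗I_N)𝐱* + R𝐅(𝐱*) = 0 (blockwise: α·Σ_{j=1}^N L_{ij} x*^j + ε·G_i(x*^i)·e_i = 0 for every i), then there exists y* ∈ ℝ^N such that x*^i = y* for every i and F(y*) = 0, i.e., G_i(y*) = 0 for every i. -/

import Mathlib

/-- every equilibrium of the stacked correction dynamics is consensus at a
Nash equilibrium: if `α·Σ_j L_{ij} x*^j + ε·G_i(x*^i)·e_i = 0` for every `i`, then all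
blocks `x*^i` coincide with some `y*` and `G_i(y*) = 0` for every `i`. -/
theorem equilibrium_is_consensus_NE
    (N : ℕ) (hN : 0 < N) (α ε : ℝ) (hα : 0 < α) (hε : 0 < ε)
    (L : Matrix (Fin N) (Fin N) ℝ) (hLsymm : L.IsSymm) (hLpsd : L.PosSemidef)
    (hL1 : L.mulVec (fun _ => 1) = 0)
    (hker : ∀ v : Fin N → ℝ, L.mulVec v = 0 → ∃ c : ℝ, v = fun _ => c)
    (G : Fin N → EuclideanSpace ℝ (Fin N) → ℝ)
    (x : Fin N → EuclideanSpace ℝ (Fin N))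
    (heq : ∀ i, α • (∑ j, L i j • x j) + (ε * G i (x i)) • EuclideanSpace.single i (1 : ℝ)
        = (0 : EuclideanSpace ℝ (Fin N))) :
    ∃ y : EuclideanSpace ℝ (Fin N), (∀ i, x i = y) ∧ ∀ i, G i y = 0 := by
  -- coordinate-wise form of the equilibrium equations
  have hcoord : ∀ i k, α * (∑ j, L i j * x j k)
      + (ε * G i (x i)) * (if k = i then (1:ℝ) else 0) = 0 := by
    intro i k
    have h := congrArg (fun z : EuclideanSpace ℝ (Fin N) => z k) (heq i)
    simp only [PiLp.add_apply, PiLp.smul_apply, PiLp.zero_apply, smul_eq_mul,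
      EuclideanSpace.single_apply] at h
    rw [show (∑ j, L i j • x j) k = ∑ j, L i j * x j k from by
      simp [WithLp.ofLp_sum, Finset.sum_apply]] at h
    simpa [mul_ite] using h
  -- for each coordinate k, the vector v k := (x j k)_j is in the kernel of L
  set v : Fin N → Fin N → ℝ := fun k j => x j k with hv
  have hoff : ∀ i k, k ≠ i → L.mulVec (v k) i = 0 := by
    intro i k hki
    have h := hcoord i k
    rw [if_neg hki] at h
    have : α * (∑ j, L i j * x j k) = 0 := by linarith
    have h2 := mul_eq_zero.mp this
    rcases h2 with h2 | h2
    · exact absurd h2 (ne_of_gt hα)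
    · simpa [Matrix.mulVec, dotProduct, hv] using h2
  have hsumrow : ∀ j, (∑ i, L i j) = 0 := by
    intro j
    have := congrFun hL1 j
    have hs : ∀ i, L j i = L i j := fun i => by
      have := congrFun (congrFun hLsymm i) j
      simpa [Matrix.transpose_apply] using this
    simpa [Matrix.mulVec, dotProduct, hs] using this
  have hkerv : ∀ k, L.mulVec (v k) = 0 := by
    intro k
    -- sum over i of (L v)_i is zero
    have hsum : (∑ i, L.mulVec (v k) i) = 0 := by
      have : (∑ i, L.mulVec (v k) i) = ∑ j, (∑ i, L i j) * v k j := by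
        simp only [Matrix.mulVec, dotProduct, Finset.sum_mul]
        rw [Finset.sum_comm]
      rw [this]
      simp [hsumrow]
    have hdiag : L.mulVec (v k) k = 0 := by
      have : (∑ i, L.mulVec (v k) i) = L.mulVec (v k) k := by
        rw [Finset.sum_eq_single k]
        · intro b _ hb; exact hoff b k (Ne.symm hb)
        · intro hb; exact absurd (Finset.mem_univ k) hb
      rw [← this]; exact hsum
    funext i
    by_cases hik : k = i
    · subst hik; simpa using hdiag
    · simpa using hoff i k hik
  -- extract consensus value
  choose c hc using fun k => hker (v k) (hkerv k)
  refine ⟨(WithLp.toLp 2 (fun k => c k) : EuclideanSpace ℝ (Fin N)), ?_, ?_⟩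
  · intro i
    ext k
    have := congrFun (hc k) i
    simpa [hv] using this
  · intro i
    have hxi : x i = (WithLp.toLp 2 (fun k => c k) : EuclideanSpace ℝ (Fin N)) := by
      ext k
      have := congrFun (hc k) i
      simpa [hv] using this
    rw [← hxi]
    have h := hcoord i i
    rw [if_pos rfl] at h
    have hdiag : (∑ j, L i j * x j i) = 0 := by
      have := congrFun (hkerv i) i
      simpa [Matrix.mulVec, dotProduct, hv] using this
    rw [hdiag, mul_zero, zero_add, mul_one] at h
    rcases mul_eq_zero.mp h with h | h
    · exact absurd h (ne_of_gt hε)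
    · exact h
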